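/- Let H and K be complex inner product spaces with dim(H) ≥ 2, and let T : H → K be a real-linear isometry preserving orthogonality. Then the following statements are equivalent: (a) T is complex-linear or conjugate-linear; (b) for every non-zero z ∈ H, T(i z) ∈ {i T(z), -i T(z)}; (c) there exists a non-zero z ∈ H with T(i z) ∈ {i T(z), -i T(z)}; (d) there exists a non-zero x₀ ∈ H such that i T(x₀) ∈ T(H). -/

import Mathlib

open scoped ComplexInnerProductSpace

section Aux
variable {H K : Type*} [NormedAddCommGroup H] [InnerProductSpace ℂ H]
    [NormedAddCommGroup K] [InnerProductSpace ℂ K]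
    (T : H → K)
    (hadd : ∀ x y, T (x + y) = T x + T y)
    (hsmul : ∀ (r : ℝ) (x : H), T (r • x) = r • T x)
    (hiso : ∀ x, ‖T x‖ = ‖x‖)
    (hop : ∀ x y : H, ⟪x, y⟫ = 0 → ⟪T x, T y⟫ = 0)

include hsmul in
lemma Tneg (x : H) : T (-x) = -T x := by simpa using hsmul (-1) x

include hadd hsmul in
lemma Tsub (x y : H) : T (x - y) = T x - T y := by
  rw [sub_eq_add_neg, hadd, Tneg T hsmul, sub_eq_add_neg]

include hadd hiso in
lemma Tre (x y : H) : (⟪T x, T y⟫).re = (⟪x, y⟫).re := by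
  have h1 := norm_add_sq (𝕜 := ℂ) (T x) (T y)
  have h2 := norm_add_sq (𝕜 := ℂ) x y
  rw [← hadd, hiso, hiso, hiso] at h1
  have : 2 * RCLike.re ⟪T x, T y⟫ = 2 * RCLike.re ⟪x, y⟫ := by linarith
  simpa [RCLike.re_to_complex] using this

include hadd hiso in
lemma c_re (x : H) : (⟪T x, T (Complex.I • x)⟫).re = 0 := by
  rw [Tre T hadd hiso]
  simp only [inner_smul_right, Complex.mul_re, Complex.I_re, Complex.I_im]
  have := inner_self_im (𝕜 := ℂ) x
  simp only [RCLike.im_to_complex] at this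
  simp [this]
  rw [← Complex.ofReal_pow, Complex.ofReal_im]

include hadd hiso in
lemma c_conj (x : H) :
    ⟪T (Complex.I • x), T x⟫ = -⟪T x, T (Complex.I • x)⟫ := by
  have h := c_re T hadd hiso x
  have h2 := inner_conj_symm (𝕜 := ℂ) (T x) (T (Complex.I • x))
  have h3 : ⟪T (Complex.I • x), T x⟫ = (starRingEnd ℂ) ⟪T x, T (Complex.I • x)⟫ := by
    rw [← h2, Complex.conj_conj]
  rw [h3]
  apply Complex.ext
  · simp only [Complex.conj_re, Complex.neg_re, h, neg_zero]
  · simp only [Complex.conj_im, Complex.neg_im]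

include hadd hsmul hiso hop in
lemma c_orthog {x y : H} (h : ⟪x, y⟫ = 0) (hn : ‖x‖ = ‖y‖) :
    ⟪T x, T (Complex.I • x)⟫ = ⟪T y, T (Complex.I • y)⟫ := by
  have hyx : ⟪y, x⟫ = 0 := by rw [← inner_conj_symm, h, map_zero]
  have horth : ⟪x + y, Complex.I • x - Complex.I • y⟫ = 0 := by
    simp only [inner_add_left, inner_sub_right, inner_smul_right, h, hyx,
      inner_self_eq_norm_sq_to_K, hn]
    ring
  have h0 := hop _ _ horth
  rw [hadd, Tsub T hadd hsmul] at h0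
  have hxy' : ⟪T x, T (Complex.I • y)⟫ = 0 := by
    apply hop; rw [inner_smul_right, h, mul_zero]
  have hyx' : ⟪T y, T (Complex.I • x)⟫ = 0 := by
    apply hop; rw [inner_smul_right, hyx, mul_zero]
  simp only [inner_add_left, inner_sub_right, hxy', hyx'] at h0
  linear_combination h0


include hadd hsmul in
lemma Texpand (l : ℂ) (x : H) :
    T (l • x) = l.re • T x + l.im • T (Complex.I • x) := by
  have hx : l • x = l.re • x + l.im • (Complex.I • x) := by
    rw [← Complex.coe_smul, ← Complex.coe_smul, smul_smul, ← add_smul, Complex.re_add_im]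
  rw [hx, hadd, hsmul, hsmul]

end Aux

section Aux2
variable {H : Type*} [NormedAddCommGroup H] [InnerProductSpace ℂ H]

lemma exists_orth (hdim : 2 ≤ Module.rank ℂ H) (x : H) (hx : ‖x‖ = 1) :
    ∃ z : H, ‖z‖ = 1 ∧ ⟪x, z⟫ = 0 := by
  have hxx : ⟪x, x⟫ = 1 := by
    rw [inner_self_eq_norm_sq_to_K, hx]; norm_num
  obtain ⟨y, hy⟩ : ∃ y : H, y ∉ Submodule.span ℂ {x} := by
    by_contra hcon
    push_neg at hcon
    have htop : (Submodule.span ℂ ({x} : Set H)) = ⊤ := by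
      rw [eq_top_iff]; intro y _; exact hcon y
    have h1 : Module.rank ℂ H ≤ 1 := by
      have h2 := rank_span_le (R := ℂ) ({x} : Set H)
      rw [htop] at h2
      simpa using h2
    have := le_trans hdim h1
    norm_num at this
  set v := y - ⟪x, y⟫ • x with hv
  have hvne : v ≠ 0 := by
    intro h0
    rw [hv, sub_eq_zero] at h0
    exact hy (h0 ▸ Submodule.smul_mem _ _ (Submodule.mem_span_singleton_self x))
  have hxv : ⟪x, v⟫ = 0 := by
    simp [hv, inner_sub_right, inner_smul_right, hxx, hx]
  have hvn : ‖v‖ ≠ 0 := norm_ne_zero_iff.mpr hvne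
  refine ⟨‖v‖⁻¹ • v, ?_, ?_⟩
  · rw [norm_smul]
    simp [Real.norm_eq_abs, abs_of_pos (inv_pos.mpr (lt_of_le_of_ne (norm_nonneg v) (Ne.symm hvn)))]
    field_simp
  · rw [← Complex.coe_smul, inner_smul_right, hxv, mul_zero]

end Aux2


section Main
variable {H K : Type*} [NormedAddCommGroup H] [InnerProductSpace ℂ H]
    [NormedAddCommGroup K] [InnerProductSpace ℂ K]
    (T : H → K)
    (hadd : ∀ x y, T (x + y) = T x + T y)
    (hsmul : ∀ (r : ℝ) (x : H), T (r • x) = r • T x)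
    (hiso : ∀ x, ‖T x‖ = ‖x‖)
    (hop : ∀ x y : H, ⟪x, y⟫ = 0 → ⟪T x, T y⟫ = 0)

include hadd hsmul hiso hop in
lemma c_const (hdim : 2 ≤ Module.rank ℂ H) {x y : H} (hx : ‖x‖ = 1) (hy : ‖y‖ = 1) :
    ⟪T x, T (Complex.I • x)⟫ = ⟪T y, T (Complex.I • y)⟫ := by
  have hxx : ⟪x, x⟫ = 1 := by rw [inner_self_eq_norm_sq_to_K, hx]; norm_num
  by_cases hv0 : y - ⟪x, y⟫ • x = 0
  · rw [sub_eq_zero] at hv0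
    obtain ⟨z, hz1, hxz⟩ := exists_orth hdim x hx
    have hyz : ⟪y, z⟫ = 0 := by
      rw [hv0, inner_smul_left, hxz, mul_zero]
    calc ⟪T x, T (Complex.I • x)⟫ = ⟪T z, T (Complex.I • z)⟫ :=
          c_orthog T hadd hsmul hiso hop hxz (hx.trans hz1.symm)
      _ = ⟪T y, T (Complex.I • y)⟫ := (c_orthog T hadd hsmul hiso hop hyz (hy.trans hz1.symm)).symm
  · set α := ⟪x, y⟫ with hα
    set v := y - α • x with hv
    have hxv : ⟪x, v⟫ = 0 := by simp [hv, inner_sub_right, inner_smul_right, hxx, hx, hα]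
    have hvn : ‖v‖ ≠ 0 := norm_ne_zero_iff.mpr hv0
    set t := ‖v‖ with ht
    set w := t⁻¹ • v with hw
    have hvw : v = t • w := by rw [hw, smul_inv_smul₀ hvn]
    have hw1 : ‖w‖ = 1 := by
      rw [hw, norm_smul, Real.norm_eq_abs, abs_inv, _root_.abs_of_nonneg (norm_nonneg v)]
      field_simp
    have hxw : ⟪x, w⟫ = 0 := by
      rw [hw, ← Complex.coe_smul, inner_smul_right, hxv, mul_zero]
    have hwx : ⟪w, x⟫ = 0 := by rw [← inner_conj_symm, hxw, map_zero]
    have hcw : ⟪T x, T (Complex.I • x)⟫ = ⟪T w, T (Complex.I • w)⟫ :=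
      c_orthog T hadd hsmul hiso hop hxw (hx.trans hw1.symm)
    have hy_eq : y = α • x + t • w := by rw [← hvw, hv]; abel
    -- Pythagoras
    have hax : ⟪α • x, v⟫ = 0 := by rw [inner_smul_left, hxv, mul_zero]
    have hpyth : α.re ^ 2 + α.im ^ 2 + t ^ 2 = 1 := by
      have hp := norm_add_sq (𝕜 := ℂ) (α • x) v
      have hyv : α • x + v = y := by rw [hv]; abel
      rw [hyv, hy, hax] at hp
      have hna : ‖α • x‖ = ‖α‖ := by
        rw [norm_smul, hx, mul_one]
      rw [hna] at hp
      have habs : ‖α‖ ^ 2 = α.re ^ 2 + α.im ^ 2 := by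
        rw [Complex.sq_norm, Complex.normSq_apply]; ring
      rw [habs] at hp
      simp at hp
      nlinarith [hp]
    have hTy : T y = α.re • T x + α.im • T (Complex.I • x) + t • T w := by
      rw [hy_eq, hadd, Texpand T hadd hsmul, hsmul]
    have hIy : Complex.I • y = (Complex.I * α) • x + t • (Complex.I • w) := by
      rw [hy_eq, smul_add, smul_smul, smul_comm]
    have hTIy : T (Complex.I • y) =
        (Complex.I * α).re • T x + (Complex.I * α).im • T (Complex.I • x)
          + t • T (Complex.I • w) := by
      rw [hIy, hadd, Texpand T hadd hsmul, hsmul]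
    have hTx1 : ‖T x‖ = 1 := (hiso x).trans hx
    have hTix1 : ‖T (Complex.I • x)‖ = 1 := by
      rw [hiso, norm_smul]; simp [hx]
    have hPP : ⟪T x, T x⟫ = 1 := by rw [inner_self_eq_norm_sq_to_K, hTx1]; norm_num
    have hQQ : ⟪T (Complex.I • x), T (Complex.I • x)⟫ = 1 := by
      rw [inner_self_eq_norm_sq_to_K, hTix1]; norm_num
    have hQP := c_conj T hadd hiso x
    have hPS : ⟪T x, T (Complex.I • w)⟫ = 0 := hop _ _ (by rw [inner_smul_right, hxw, mul_zero])
    have hQS : ⟪T (Complex.I • x), T (Complex.I • w)⟫ = 0 :=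
      hop _ _ (by rw [inner_smul_right, inner_smul_left, hxw]; ring)
    have hRP : ⟪T w, T x⟫ = 0 := hop _ _ hwx
    have hRQ : ⟪T w, T (Complex.I • x)⟫ = 0 :=
      hop _ _ (by rw [inner_smul_right, hwx, mul_zero])
    have key : ⟪T y, T (Complex.I • y)⟫ =
        ((α.re ^ 2 + α.im ^ 2 + t ^ 2 : ℝ) : ℂ) * ⟪T x, T (Complex.I • x)⟫ := by
      rw [hTy, hTIy]
      simp only [inner_add_left, inner_add_right, ← Complex.coe_smul,
        inner_smul_left, inner_smul_right, Complex.conj_ofReal,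
        hPP, hQQ, hQP, hPS, hQS, hRP, hRQ, ← hcw,
        Complex.mul_re, Complex.mul_im, Complex.I_re, Complex.I_im]
      push_cast
      ring
    rw [key, hpyth]
    simp


include hadd hsmul hiso in
lemma sign_lemma {u : H} (hu : ‖u‖ = 1) :
    (T (Complex.I • u) = Complex.I • T u ↔ (⟪T u, T (Complex.I • u)⟫).im = 1) ∧
    (T (Complex.I • u) = -(Complex.I • T u) ↔ (⟪T u, T (Complex.I • u)⟫).im = -1) := by
  have hTu : ‖T u‖ = 1 := (hiso u).trans hu
  have hTiu : ‖T (Complex.I • u)‖ = 1 := by rw [hiso, norm_smul]; simp [hu]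
  have hITu : ‖Complex.I • T u‖ = 1 := by rw [norm_smul]; simp [hTu]
  have hinner : ⟪T (Complex.I • u), Complex.I • T u⟫ =
      Complex.I * (-⟪T u, T (Complex.I • u)⟫) := by
    rw [inner_smul_right, c_conj T hadd hiso]
  have hre : (⟪T (Complex.I • u), Complex.I • T u⟫).re = (⟪T u, T (Complex.I • u)⟫).im := by
    rw [hinner]; simp
  have h1 : ‖T (Complex.I • u) - Complex.I • T u‖ ^ 2 =
      2 - 2 * (⟪T u, T (Complex.I • u)⟫).im := by
    rw [norm_sub_sq (𝕜 := ℂ), hTiu, hITu]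
    simp only [RCLike.re_to_complex, hre]
    ring
  have h2 : ‖T (Complex.I • u) + Complex.I • T u‖ ^ 2 =
      2 + 2 * (⟪T u, T (Complex.I • u)⟫).im := by
    rw [norm_add_sq (𝕜 := ℂ), hTiu, hITu]
    simp only [RCLike.re_to_complex, hre]
    ring
  constructor
  · constructor
    · intro h
      have h0 : ‖T (Complex.I • u) - Complex.I • T u‖ ^ 2 = 0 := by rw [h]; simp
      linarith [h0.symm.trans h1]
    · intro h
      rw [h] at h1
      have : ‖T (Complex.I • u) - Complex.I • T u‖ ^ 2 = 0 := by rw [h1]; ring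
      have := pow_eq_zero_iff (n := 2) (by norm_num) |>.mp this
      rw [norm_eq_zero, sub_eq_zero] at this
      exact this
  · constructor
    · intro h
      have h0 : ‖T (Complex.I • u) + Complex.I • T u‖ ^ 2 = 0 := by rw [h]; simp
      linarith [h0.symm.trans h2]
    · intro h
      rw [h] at h2
      have : ‖T (Complex.I • u) + Complex.I • T u‖ ^ 2 = 0 := by rw [h2]; ring
      have := pow_eq_zero_iff (n := 2) (by norm_num) |>.mp this
      rw [norm_eq_zero, add_eq_zero_iff_eq_neg] at this
      exact this

include hsmul in
lemma P_scale {z : H} (hz : z ≠ 0) :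
    (T (Complex.I • z) = Complex.I • T z ↔
      T (Complex.I • (‖z‖⁻¹ • z)) = Complex.I • T (‖z‖⁻¹ • z)) ∧
    (T (Complex.I • z) = -(Complex.I • T z) ↔
      T (Complex.I • (‖z‖⁻¹ • z)) = -(Complex.I • T (‖z‖⁻¹ • z))) := by
  have hn : ‖z‖ ≠ 0 := norm_ne_zero_iff.mpr hz
  have h1 : T (Complex.I • (‖z‖⁻¹ • z)) = ‖z‖⁻¹ • T (Complex.I • z) := by
    rw [smul_comm, hsmul]
  have h2 : Complex.I • T (‖z‖⁻¹ • z) = ‖z‖⁻¹ • (Complex.I • T z) := by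
    rw [hsmul, smul_comm]
  rw [h1, h2]
  have hinj := smul_right_injective K (inv_ne_zero hn)
  constructor
  · constructor
    · intro h; rw [h]
    · intro h; exact hinj h
  · constructor
    · intro h; rw [h, smul_neg]
    · intro h; rw [← smul_neg] at h; exact hinj h

lemma unit_norm {z : H} (hz : z ≠ 0) : ‖(‖z‖⁻¹ • z : H)‖ = 1 := by
  have hn : ‖z‖ ≠ 0 := norm_ne_zero_iff.mpr hz
  rw [norm_smul, Real.norm_eq_abs, abs_inv, _root_.abs_of_nonneg (norm_nonneg z)]
  field_simp

end Main


/-- Characterization of complex-linearity/conjugate-linearity for a real-linear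
isometry `T` preserving orthogonality between complex inner product spaces
(`dim H ≥ 2`): (a) `T` is complex-linear or conjugate-linear ↔ (b) every non-zero
`z` satisfies `T(iz) ∈ {i T z, -i T z}` ↔ (c) some non-zero `z` does ↔ (d) some
non-zero `x₀` has `i T(x₀) ∈ T(H)`. -/
theorem characterization_complexLinear_isometry_op
    {H K : Type*} [NormedAddCommGroup H] [InnerProductSpace ℂ H]
    [NormedAddCommGroup K] [InnerProductSpace ℂ K]
    (hdim : 2 ≤ Module.rank ℂ H)
    (T : H → K)
    (hadd : ∀ x y, T (x + y) = T x + T y)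
    (hsmul : ∀ (r : ℝ) (x : H), T (r • x) = r • T x)
    (hiso : ∀ x, ‖T x‖ = ‖x‖)
    (hop : ∀ x y : H, ⟪x, y⟫ = 0 → ⟪T x, T y⟫ = 0) :
    (((∀ (l : ℂ) (x : H), T (l • x) = l • T x) ∨
        (∀ (l : ℂ) (x : H), T (l • x) = (starRingEnd ℂ l) • T x)) ↔
      (∀ z : H, z ≠ 0 →
        T (Complex.I • z) = Complex.I • T z ∨ T (Complex.I • z) = -(Complex.I • T z))) ∧
    ((∀ z : H, z ≠ 0 →
        T (Complex.I • z) = Complex.I • T z ∨ T (Complex.I • z) = -(Complex.I • T z)) ↔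
      (∃ z : H, z ≠ 0 ∧
        (T (Complex.I • z) = Complex.I • T z ∨ T (Complex.I • z) = -(Complex.I • T z)))) ∧
    ((∃ z : H, z ≠ 0 ∧
        (T (Complex.I • z) = Complex.I • T z ∨ T (Complex.I • z) = -(Complex.I • T z))) ↔
      (∃ x₀ : H, x₀ ≠ 0 ∧ Complex.I • T x₀ ∈ Set.range T)) := by
  have hnt : Nontrivial H := by
    have h0 : (0 : Cardinal) < Module.rank ℂ H := lt_of_lt_of_le (by norm_num) hdim
    exact rank_pos_iff_nontrivial.mp h0
  obtain ⟨x1, hx1⟩ := exists_ne (0 : H)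
  have hT0 : T 0 = 0 := by simpa using hsmul 0 0
  -- the key rigidity statement
  have main : (∃ z : H, z ≠ 0 ∧
      (T (Complex.I • z) = Complex.I • T z ∨ T (Complex.I • z) = -(Complex.I • T z))) →
      (∀ x : H, T (Complex.I • x) = Complex.I • T x) ∨
        (∀ x : H, T (Complex.I • x) = -(Complex.I • T x)) := by
    rintro ⟨z, hz, hPz⟩
    set u := ‖z‖⁻¹ • z with hu
    have hu1 : ‖u‖ = 1 := unit_norm hz
    have hps := P_scale T hsmul hz
    have hs := sign_lemma T hadd hsmul hiso hu1
    have him : (⟪T u, T (Complex.I • u)⟫).im = 1 ∨ (⟪T u, T (Complex.I • u)⟫).im = -1 := by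
      rcases hPz with h | h
      · exact Or.inl (hs.1.mp (hps.1.mp h))
      · exact Or.inr (hs.2.mp (hps.2.mp h))
    rcases him with him | him
    · left
      intro x
      by_cases hx : x = 0
      · rw [hx]; simp [hT0]
      · have hw1 : ‖(‖x‖⁻¹ • x : H)‖ = 1 := unit_norm hx
        have hcc := c_const T hadd hsmul hiso hop hdim hw1 hu1
        have h2 : (⟪T (‖x‖⁻¹ • x), T (Complex.I • (‖x‖⁻¹ • x))⟫).im = 1 := by
          rw [hcc]; exact him
        exact (P_scale T hsmul hx).1.mpr
          ((sign_lemma T hadd hsmul hiso hw1).1.mpr h2)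
    · right
      intro x
      by_cases hx : x = 0
      · rw [hx]; simp [hT0]
      · have hw1 : ‖(‖x‖⁻¹ • x : H)‖ = 1 := unit_norm hx
        have hcc := c_const T hadd hsmul hiso hop hdim hw1 hu1
        have h2 : (⟪T (‖x‖⁻¹ • x), T (Complex.I • (‖x‖⁻¹ • x))⟫).im = -1 := by
          rw [hcc]; exact him
        exact (P_scale T hsmul hx).2.mpr
          ((sign_lemma T hadd hsmul hiso hw1).2.mpr h2)
  -- (main disjunction) → (a)
  have main_a : ((∀ x : H, T (Complex.I • x) = Complex.I • T x) ∨
        (∀ x : H, T (Complex.I • x) = -(Complex.I • T x))) →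
      ((∀ (l : ℂ) (x : H), T (l • x) = l • T x) ∨
        (∀ (l : ℂ) (x : H), T (l • x) = (starRingEnd ℂ l) • T x)) := by
    rintro (h | h)
    · left
      intro l x
      rw [Texpand T hadd hsmul, h x, ← Complex.coe_smul, ← Complex.coe_smul,
        smul_smul, ← add_smul, Complex.re_add_im]
    · right
      intro l x
      rw [Texpand T hadd hsmul, h x]
      have hconj : (starRingEnd ℂ l) • T x
          = l.re • T x + (-l.im) • (Complex.I • T x) := by
        rw [← Complex.coe_smul, ← Complex.coe_smul, smul_smul, ← add_smul]
        congr 1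
        apply Complex.ext <;> simp
      rw [hconj, smul_neg, neg_smul]
  -- (a) → (b)
  have a_b : ((∀ (l : ℂ) (x : H), T (l • x) = l • T x) ∨
        (∀ (l : ℂ) (x : H), T (l • x) = (starRingEnd ℂ l) • T x)) →
      (∀ z : H, z ≠ 0 →
        T (Complex.I • z) = Complex.I • T z ∨ T (Complex.I • z) = -(Complex.I • T z)) := by
    rintro (h | h) z _
    · exact Or.inl (h Complex.I z)
    · right
      rw [h Complex.I z, Complex.conj_I, neg_smul]
  refine ⟨⟨a_b, fun hb => ?_⟩, ⟨fun hb => ⟨x1, hx1, hb x1 hx1⟩, fun hc z hz => ?_⟩, ?_, ?_⟩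
  · exact main_a (main ⟨x1, hx1, hb x1 hx1⟩)
  · rcases main hc with h | h
    · exact Or.inl (h z)
    · exact Or.inr (h z)
  · rintro ⟨z, hz, h | h⟩
    · exact ⟨z, hz, ⟨Complex.I • z, h⟩⟩
    · refine ⟨z, hz, ⟨-(Complex.I • z), ?_⟩⟩
      rw [Tneg T hsmul, h, neg_neg]
  · rintro ⟨x₀, hx0, y, hy⟩
    have hn : ‖x₀‖ ≠ 0 := norm_ne_zero_iff.mpr hx0
    set u := ‖x₀‖⁻¹ • x₀ with hu
    have hu1 : ‖u‖ = 1 := unit_norm hx0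
    have huu : ⟪u, u⟫ = 1 := by rw [inner_self_eq_norm_sq_to_K, hu1]; norm_num
    have hTu1 : ‖T u‖ = 1 := (hiso u).trans hu1
    have hTuTu : ⟪T u, T u⟫ = 1 := by rw [inner_self_eq_norm_sq_to_K, hTu1]; norm_num
    set y' := (‖x₀‖⁻¹ • y : H) with hy'
    have hTy' : T y' = Complex.I • T u := by
      rw [hy', hsmul, hy, hu, hsmul, smul_comm]
    set c := ⟪T u, T (Complex.I • u)⟫ with hc
    have hcre : c.re = 0 := c_re T hadd hiso u
    set l := ⟪u, y'⟫ with hl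
    have hlre : l.re = 0 := by
      have h3 := Tre T hadd hiso u y'
      rw [hTy', inner_smul_right, hTuTu, mul_one] at h3
      rw [hl, ← h3]
      simp
    have hlim : l.im = c.im := by
      have h3 := Tre T hadd hiso (Complex.I • u) y'
      rw [hTy', inner_smul_right, c_conj T hadd hiso, inner_smul_left] at h3
      rw [hl]
      rw [Complex.conj_I] at h3
      simp only [Complex.mul_re, Complex.neg_re, Complex.neg_im, Complex.I_re,
        Complex.I_im, neg_mul, mul_neg] at h3
      rw [← hc] at h3
      linarith [h3]
    set v := y' - l • u with hv
    have hov : ⟪u, v⟫ = 0 := by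
      simp [hv, inner_sub_right, inner_smul_right, huu, hu1, hl]
    have h0 := hop _ _ hov
    have hTv : T v = Complex.I • T u - (l.re • T u + l.im • T (Complex.I • u)) := by
      rw [hv, Tsub T hadd hsmul, hTy', Texpand T hadd hsmul]
    rw [hTv] at h0
    simp only [inner_sub_right, inner_add_right, ← Complex.coe_smul,
      inner_smul_right, hTuTu, mul_one, ← hc] at h0
    rw [Complex.ext_iff] at h0
    simp only [Complex.sub_re, Complex.sub_im, Complex.add_re, Complex.add_im,
      Complex.mul_re, Complex.mul_im, Complex.I_re, Complex.I_im,
      Complex.ofReal_re, Complex.ofReal_im, Complex.zero_re, Complex.zero_im] at h0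
    obtain ⟨-, h0im⟩ := h0
    rw [hlim] at h0im
    have hsq : c.im ^ 2 = 1 := by nlinarith [h0im]
    have him : c.im = 1 ∨ c.im = -1 := by
      rcases mul_eq_zero.mp (show (c.im - 1) * (c.im + 1) = 0 by nlinarith [hsq]) with h | h
      · left; linarith
      · right; linarith
    have hs := sign_lemma T hadd hsmul hiso hu1
    have hps := P_scale T hsmul hx0
    refine ⟨x₀, hx0, ?_⟩
    rcases him with him | him
    · exact Or.inl (hps.1.mpr (hs.1.mpr (by rw [← hc]; exact him)))
    · exact Or.inr (hps.2.mpr (hs.2.mpr (by rw [← hc]; exact him)))
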